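/- Let n be a natural number with n ≥ 1 and n ≠ 4, and let φ : T_n → T_n satisfy φ(s ∘ s') = φ(s) ∘ φ(s') for all s, s' ∈ T_n. Then either there exists a permutation g : Equiv.Perm (Fin n) with φ = ψ_g, or there exists a permissible pair (t, e) of elements of T_n with φ = φ_{t,e}. -/

import Mathlib

set_option maxRecDepth 10000


/-- `s : Fin n → Fin n` is an odd permutation if it is the underlying function of some
permutation of sign `-1`. -/
def IsOddPerm {n : ℕ} (s : Fin n → Fin n) : Prop :=
  ∃ σ : Equiv.Perm (Fin n), Equiv.Perm.sign σ = -1 ∧ ⇑σ = s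

/-- `s : Fin n → Fin n` is an even permutation if it is the underlying function of some
permutation of sign `1`. -/
def IsEvenPerm {n : ℕ} (s : Fin n → Fin n) : Prop :=
  ∃ σ : Equiv.Perm (Fin n), Equiv.Perm.sign σ = 1 ∧ ⇑σ = s

/-- A pair `(t, e)` of elements of `T_n` is permissible if `t ∘ t ∘ t = t` and
`t ∘ e = e ∘ t = e ∘ e = e`. -/
def Permissible {n : ℕ} (t e : Fin n → Fin n) : Prop :=
  t ∘ t ∘ t = t ∧ t ∘ e = e ∧ e ∘ t = e ∧ e ∘ e = e

open Classical in
/-- For a (permissible) pair `(t, e)`, the map `φ_{t,e} : T_n → T_n` sending `s` to `t` if `s`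
is an odd permutation, to `t ∘ t` if `s` is an even permutation, and to `e` if `s` is not
bijective. -/
noncomputable def phi {n : ℕ} (t e : Fin n → Fin n) : (Fin n → Fin n) → (Fin n → Fin n) :=
  fun s => if IsOddPerm s then t else if IsEvenPerm s then t ∘ t else e

/-- `φ : T_n → T_n` is a semigroup endomorphism of `T_n` if `φ (s ∘ s') = φ s ∘ φ s'`
for all `s, s'`. -/
def IsEndo {n : ℕ} (φ : (Fin n → Fin n) → (Fin n → Fin n)) : Prop :=
  ∀ s s' : Fin n → Fin n, φ (s ∘ s') = φ s ∘ φ s'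

namespace EndoClassAux

open Equiv Equiv.Perm Function

/-! ### Generic helpers -/

lemma exists_not_mem {α : Type*} [Fintype α] [DecidableEq α] (s : Finset α)
    (h : s.card < Fintype.card α) : ∃ x, x ∉ s := by
  by_contra h'
  push_neg at h'
  have : (Finset.univ : Finset α) ⊆ s := fun x _ => h' x
  have := Finset.card_le_card this
  simp [Finset.card_univ] at this
  omega

/-- map a pair of distinct points to a pair of distinct points -/
lemma exists_map_pair {α : Type*} [DecidableEq α] {a b c d : α} (hab : a ≠ b) (hcd : c ≠ d) :
    ∃ σ : Equiv.Perm α, σ a = c ∧ σ b = d := by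
  set b₁ := Equiv.swap a c b with hb₁
  have hb₁c : b₁ ≠ c := by
    intro h
    apply hab
    have : b = a := (Equiv.swap a c).injective (h.trans (Equiv.swap_apply_left a c).symm)
    exact this.symm
  refine ⟨Equiv.swap b₁ d * Equiv.swap a c, ?_, ?_⟩
  · rw [Equiv.Perm.mul_apply, Equiv.swap_apply_left, Equiv.swap_apply_of_ne_of_ne hb₁c.symm hcd]
  · rw [Equiv.Perm.mul_apply, ← hb₁, Equiv.swap_apply_left]

lemma exists_map_triple {α : Type*} [DecidableEq α] {p q r x y z : α}
    (hpq : p ≠ q) (hpr : p ≠ r) (hqr : q ≠ r) (hxy : x ≠ y) (hxz : x ≠ z) (hyz : y ≠ z) :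
    ∃ σ : Equiv.Perm α, σ p = x ∧ σ q = y ∧ σ r = z := by
  set σ₁ := Equiv.swap p x with hσ₁
  set q₁ := σ₁ q with hq₁
  set r₁ := σ₁ r with hr₁
  have hσ₁p : σ₁ p = x := Equiv.swap_apply_left p x
  have hq₁x : q₁ ≠ x := fun h => hpq (σ₁.injective (hσ₁p.trans h.symm))
  have hr₁x : r₁ ≠ x := fun h => hpr (σ₁.injective (hσ₁p.trans h.symm))
  have hq₁r₁ : q₁ ≠ r₁ := fun h => hqr (σ₁.injective h)
  set σ₂ := Equiv.swap q₁ y with hσ₂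
  set r₂ := σ₂ r₁ with hr₂
  have hσ₂x : σ₂ x = x := Equiv.swap_apply_of_ne_of_ne hq₁x.symm hxy
  have hσ₂q₁ : σ₂ q₁ = y := Equiv.swap_apply_left q₁ y
  have hr₂x : r₂ ≠ x := fun h => hr₁x (σ₂.injective (h.trans hσ₂x.symm))
  have hr₂y : r₂ ≠ y := fun h => hq₁r₁ (σ₂.injective (hσ₂q₁.trans h.symm))
  refine ⟨Equiv.swap r₂ z * σ₂ * σ₁, ?_, ?_, ?_⟩
  · rw [Equiv.Perm.mul_apply, Equiv.Perm.mul_apply, hσ₁p, hσ₂x,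
      Equiv.swap_apply_of_ne_of_ne hr₂x.symm hxz]
  · rw [Equiv.Perm.mul_apply, Equiv.Perm.mul_apply, ← hq₁, hσ₂q₁,
      Equiv.swap_apply_of_ne_of_ne hr₂y.symm hyz]
  · rw [Equiv.Perm.mul_apply, Equiv.Perm.mul_apply, ← hr₁, ← hr₂, Equiv.swap_apply_left]


/-! ### eta maps -/

/-- The defect-one idempotent sending `a` to `b` and fixing everything else. -/
def eta {n : ℕ} (a b : Fin n) : Fin n → Fin n := fun x => if x = a then b else x

lemma eta_comp_eta {n : ℕ} {a b : Fin n} (hab : a ≠ b) : eta a b ∘ eta a b = eta a b := by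
  funext x
  by_cases hx : x = a <;> simp [eta, hx, hab.symm]

lemma eta_not_bijective {n : ℕ} {a b : Fin n} (hab : a ≠ b) :
    ¬ Function.Bijective (eta a b) := by
  intro h
  apply hab
  apply h.1
  show (if a = a then b else a) = if b = a then b else b
  rw [if_pos rfl, if_neg hab.symm]

lemma conj_eta {n : ℕ} (σ : Equiv.Perm (Fin n)) (a b : Fin n) :
    ⇑σ ∘ eta a b ∘ ⇑σ⁻¹ = eta (σ a) (σ b) := by
  funext x
  simp only [eta, Function.comp_apply]
  by_cases hx : x = σ a
  · have h1 : σ⁻¹ x = a := by rw [hx]; exact σ.symm_apply_apply a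
    rw [if_pos h1, if_pos hx]
  · have h1 : σ⁻¹ x ≠ a := fun h => hx (by rw [← h]; exact (σ.apply_symm_apply x).symm)
    rw [if_neg h1, if_neg hx]; exact σ.apply_symm_apply x

lemma conj_const {n : ℕ} (σ : Equiv.Perm (Fin n)) (j : Fin n) :
    ⇑σ ∘ Function.const (Fin n) j ∘ ⇑σ⁻¹ = Function.const (Fin n) (σ j) := rfl

lemma swap_comp_eta {n : ℕ} {a b : Fin n} (hab : a ≠ b) :
    ⇑(Equiv.swap a b) ∘ eta a b = eta b a := by
  funext x
  simp only [eta, Function.comp_apply]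
  by_cases hxa : x = a
  · rw [if_pos hxa, if_neg (hxa ▸ hab : x ≠ b), Equiv.swap_apply_right, hxa]
  · rw [if_neg hxa]
    by_cases hxb : x = b
    · rw [if_pos hxb, hxb, Equiv.swap_apply_right]
    · rw [if_neg hxb, Equiv.swap_apply_of_ne_of_ne hxa hxb]

/-! ### three-cycle decomposition -/

lemma threeCycle_decomp {α : Type*} [DecidableEq α] [Fintype α] {g : Equiv.Perm α}
    (h : g.IsThreeCycle) :
    ∃ x y z, x ≠ y ∧ x ≠ z ∧ y ≠ z ∧ g = Equiv.swap x z * Equiv.swap x y := by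
  have hcard := h.card_support
  obtain ⟨x, hx⟩ : ∃ x, x ∈ g.support := by
    rcases Finset.card_pos.mp (by omega : 0 < g.support.card) with ⟨x, hx⟩
    exact ⟨x, hx⟩
  set y := g x with hy_def
  set z := g y with hz_def
  have hyx : y ≠ x := Equiv.Perm.mem_support.mp hx
  have hy : y ∈ g.support := Equiv.Perm.apply_mem_support.mpr hx
  have hzy : z ≠ y := Equiv.Perm.mem_support.mp hy
  have hz : z ∈ g.support := Equiv.Perm.apply_mem_support.mpr hy
  have hzx : z ≠ x := by
    intro hzx
    obtain ⟨w, hwsup, hwxy⟩ : ∃ w, w ∈ g.support ∧ w ∉ ({x, y} : Finset α) := by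
      by_contra hall
      push_neg at hall
      have hsub : g.support ⊆ {x, y} := fun w hw => hall w hw
      have := Finset.card_le_card hsub
      have h2 : ({x, y} : Finset α).card ≤ 2 := Finset.card_insert_le _ _ |>.trans (by simp)
      omega
    simp only [Finset.mem_insert, Finset.mem_singleton, not_or] at hwxy
    obtain ⟨hwx, hwy⟩ := hwxy
    have hsup_eq : ({x, y, w} : Finset α) = g.support := by
      apply Finset.eq_of_subset_of_card_le
      · intro v hv
        simp only [Finset.mem_insert, Finset.mem_singleton] at hv
        rcases hv with rfl | rfl | rfl
        · exact hx
        · exact hy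
        · exact hwsup
      · rw [hcard, Finset.card_insert_of_notMem (by simp [hyx.symm, Ne.symm hwx]),
          Finset.card_insert_of_notMem (by simp [Ne.symm hwy]), Finset.card_singleton]
    have hgw : g w ∈ g.support := Equiv.Perm.apply_mem_support.mpr hwsup
    rw [← hsup_eq] at hgw
    simp only [Finset.mem_insert, Finset.mem_singleton] at hgw
    rcases hgw with h1 | h1 | h1
    · exact hwy (g.injective (h1.trans hzx.symm))
    · exact hwx (g.injective h1)
    · exact Equiv.Perm.mem_support.mp hwsup h1
  have hsub : ({x, y, z} : Finset α) ⊆ g.support := by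
    intro v hv
    simp only [Finset.mem_insert, Finset.mem_singleton] at hv
    rcases hv with rfl | rfl | rfl
    · exact hx
    · exact hy
    · exact hz
  have hc3 : ({x, y, z} : Finset α).card = 3 := by
    rw [Finset.card_insert_of_notMem (by simp [hyx.symm, hzx.symm]),
      Finset.card_insert_of_notMem (by simp [hzy.symm]), Finset.card_singleton]
  have hsup_eq : ({x, y, z} : Finset α) = g.support :=
    Finset.eq_of_subset_of_card_le hsub (by omega)
  have hgz : g z = x := by
    have h1 : g z ∈ g.support := Equiv.Perm.apply_mem_support.mpr hz
    rw [← hsup_eq] at h1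
    simp only [Finset.mem_insert, Finset.mem_singleton] at h1
    rcases h1 with h1 | h1 | h1
    · exact h1
    · exact absurd (g.injective h1) hzx
    · exact absurd h1 (Equiv.Perm.mem_support.mp hz)
  refine ⟨x, y, z, hyx.symm, hzx.symm, hzy.symm, ?_⟩
  ext w
  simp only [Equiv.Perm.mul_apply]
  by_cases hwx : w = x
  · subst hwx
    rw [Equiv.swap_apply_left, Equiv.swap_apply_of_ne_of_ne hyx (Ne.symm hzy), ← hy_def]
  · by_cases hwy : w = y
    · subst hwy
      rw [Equiv.swap_apply_right, Equiv.swap_apply_left, ← hz_def]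
    · by_cases hwz : w = z
      · subst hwz
        rw [Equiv.swap_apply_of_ne_of_ne hwx hwy, Equiv.swap_apply_right, hgz]
      · have hwsup : w ∉ g.support := by
          rw [← hsup_eq]
          simp [hwx, hwy, hwz]
        rw [Equiv.swap_apply_of_ne_of_ne hwx hwy, Equiv.swap_apply_of_ne_of_ne hwx hwz,
          Equiv.Perm.notMem_support.mp hwsup]

/-! ### Normal closure of a nontrivial element contains all even permutations -/

lemma evenP (n : ℕ) (hn : 2 ≤ n) (hn4 : n ≠ 4) (P : Equiv.Perm (Fin n) → Prop)
    (h1 : P 1) (hmul : ∀ σ τ, P σ → P τ → P (σ * τ))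
    (hconj : ∀ σ τ, P τ → P (σ * τ * σ⁻¹))
    (ρ : Equiv.Perm (Fin n)) (hρ1 : ρ ≠ 1) (hρ : P ρ) :
    ∀ σ, Equiv.Perm.sign σ = 1 → P σ := by
  have hinv : ∀ σ, P σ → P σ⁻¹ := by
    intro σ hσ
    have hpow : ∀ k : ℕ, P (σ ^ (k + 1)) := by
      intro k
      induction k with
      | zero => simpa using hσ
      | succ k ih => rw [pow_succ]; exact hmul _ _ ih hσ
    have ho : 1 ≤ orderOf σ := orderOf_pos σ
    rcases Nat.lt_or_ge 1 (orderOf σ) with h | h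
    · have hmo : σ ^ (orderOf σ - 1) * σ = 1 := by
        rw [← pow_succ, Nat.sub_add_cancel ho, pow_orderOf_eq_one]
      have heq : σ ^ (orderOf σ - 1) = σ⁻¹ := eq_inv_of_mul_eq_one_left hmo
      obtain ⟨k, hk⟩ : ∃ k, orderOf σ - 1 = k + 1 := ⟨orderOf σ - 2, by omega⟩
      rw [← heq, hk]
      exact hpow k
    · have hσ1 : σ = 1 := orderOf_eq_one_iff.mp (le_antisymm h ho)
      rw [hσ1, inv_one]; exact h1
  rcases Nat.lt_or_ge n 5 with h5 | h5
  · interval_cases n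
    · -- n = 2
      intro σ hσ
      have hcl : ∀ τ : Equiv.Perm (Fin 2), τ = 1 ∨ τ = Equiv.swap 0 1 := by decide
      rcases hcl σ with rfl | rfl
      · exact h1
      · rw [Equiv.Perm.sign_swap (by decide)] at hσ
        exact absurd hσ (by decide)
    · -- n = 3
      intro σ hσ
      have key : ∀ ρ σ : Equiv.Perm (Fin 3), ρ ≠ 1 → σ = 1 ∨ σ = Equiv.swap 0 1 ∨
          σ = Equiv.swap 0 2 ∨ σ = Equiv.swap 1 2 ∨
          ∃ π₁ π₂ : Equiv.Perm (Fin 3), σ = π₁ * ρ * π₁⁻¹ * (π₂ * ρ * π₂⁻¹) := by decide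
      rcases key ρ σ hρ1 with rfl | rfl | rfl | rfl | ⟨π₁, π₂, rfl⟩
      · exact h1
      · rw [Equiv.Perm.sign_swap (by decide)] at hσ; exact absurd hσ (by decide)
      · rw [Equiv.Perm.sign_swap (by decide)] at hσ; exact absurd hσ (by decide)
      · rw [Equiv.Perm.sign_swap (by decide)] at hσ; exact absurd hσ (by decide)
      · exact hmul _ _ (hconj π₁ ρ hρ) (hconj π₂ ρ hρ)
    · exact absurd rfl hn4
  · -- n ≥ 5
    have hcardn : Fintype.card (Fin n) = n := Fintype.card_fin n
    obtain ⟨a, ha⟩ : ∃ a, ρ a ≠ a := by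
      by_contra hfix
      push_neg at hfix
      exact hρ1 (Equiv.ext fun x => by rw [hfix x, Equiv.Perm.one_apply])
    set b := ρ a with hb_def
    have hba : b ≠ a := ha
    obtain ⟨c, hc⟩ : ∃ c, c ∉ ({a, b} : Finset (Fin n)) := by
      apply exists_not_mem
      rw [hcardn]
      refine lt_of_le_of_lt (Finset.card_insert_le _ _) ?_
      simp only [Finset.card_singleton]
      omega
    simp only [Finset.mem_insert, Finset.mem_singleton, not_or] at hc
    obtain ⟨hca, hcb⟩ := hc
    set d := ρ c with hd_def
    have hdb : d ≠ b := fun h => hca (ρ.injective h)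
    have hdd : d ≠ c ∨ True := Or.inr trivial
    have hνP : P (ρ * (Equiv.swap a c * ρ⁻¹ * (Equiv.swap a c)⁻¹)) :=
      hmul _ _ hρ (hconj _ _ (hinv ρ hρ))
    have hν : ρ * (Equiv.swap a c * ρ⁻¹ * (Equiv.swap a c)⁻¹) =
        Equiv.swap b d * Equiv.swap a c := by
      have h2 : ρ * (Equiv.swap a c * ρ⁻¹ * (Equiv.swap a c)⁻¹) =
          (ρ * Equiv.swap a c * ρ⁻¹) * (Equiv.swap a c)⁻¹ := by group
      rw [h2, ← Equiv.swap_apply_apply, Equiv.swap_inv, ← hb_def, ← hd_def]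
    rw [hν] at hνP
    have key3 : ∃ x y z : Fin n, x ≠ y ∧ x ≠ z ∧ y ≠ z ∧
        P (Equiv.swap x y * Equiv.swap x z) := by
      by_cases hda : d = a
      · refine ⟨a, b, c, hba.symm, Ne.symm hca, Ne.symm hcb, ?_⟩
        rw [hda] at hνP
        rwa [Equiv.swap_comm b a] at hνP
      · by_cases hdc : d = c
        · refine ⟨c, b, a, hcb, hca, hba, ?_⟩
          rw [hdc] at hνP
          rwa [Equiv.swap_comm b c, Equiv.swap_comm a c] at hνP
        · obtain ⟨e, he⟩ : ∃ e, e ∉ ({a, b, c, d} : Finset (Fin n)) := by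
            apply exists_not_mem
            rw [hcardn]
            refine lt_of_le_of_lt (Finset.card_insert_le _ _) ?_
            refine lt_of_le_of_lt (Nat.succ_le_succ (Finset.card_insert_le _ _)) ?_
            refine lt_of_le_of_lt (Nat.succ_le_succ (Nat.succ_le_succ (Finset.card_insert_le _ _))) ?_
            simp only [Finset.card_singleton]
            omega
          simp only [Finset.mem_insert, Finset.mem_singleton, not_or] at he
          obtain ⟨hea, heb, hec, hed⟩ := he
          have hν'P : P (Equiv.swap c e * (Equiv.swap b d * Equiv.swap a c) * (Equiv.swap c e)⁻¹) :=
            hconj _ _ hνP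
          have hν' : Equiv.swap c e * (Equiv.swap b d * Equiv.swap a c) * (Equiv.swap c e)⁻¹ =
              Equiv.swap b d * Equiv.swap a e := by
            have h2 : Equiv.swap c e * (Equiv.swap b d * Equiv.swap a c) * (Equiv.swap c e)⁻¹ =
                (Equiv.swap c e * Equiv.swap b d * (Equiv.swap c e)⁻¹) *
                (Equiv.swap c e * Equiv.swap a c * (Equiv.swap c e)⁻¹) := by group
            rw [h2, ← Equiv.swap_apply_apply, ← Equiv.swap_apply_apply,
              Equiv.swap_apply_of_ne_of_ne (Ne.symm hcb) (Ne.symm heb),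
              Equiv.swap_apply_of_ne_of_ne hdc (Ne.symm hed),
              Equiv.swap_apply_of_ne_of_ne (Ne.symm hca) (Ne.symm hea),
              Equiv.swap_apply_left]
          rw [hν'] at hν'P
          have hdisj : (Equiv.swap a c).Disjoint (Equiv.swap b d) := by
            intro x
            by_cases hxb : x = b
            · subst hxb
              left
              exact Equiv.swap_apply_of_ne_of_ne hba (Ne.symm hcb)
            · by_cases hxd : x = d
              · subst hxd
                left
                exact Equiv.swap_apply_of_ne_of_ne (fun h => hda h) (fun h => hdc h)
              · right
                exact Equiv.swap_apply_of_ne_of_ne hxb hxd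
          have hcomm : Equiv.swap a c * Equiv.swap b d = Equiv.swap b d * Equiv.swap a c :=
            hdisj.commute.eq
          have hprod : (Equiv.swap b d * Equiv.swap a c) * (Equiv.swap b d * Equiv.swap a e) =
              Equiv.swap a c * Equiv.swap a e := by
            calc (Equiv.swap b d * Equiv.swap a c) * (Equiv.swap b d * Equiv.swap a e)
                = Equiv.swap b d * (Equiv.swap a c * Equiv.swap b d) * Equiv.swap a e := by group
              _ = Equiv.swap b d * (Equiv.swap b d * Equiv.swap a c) * Equiv.swap a e := by
                  rw [hcomm]
              _ = (Equiv.swap b d * Equiv.swap b d) * (Equiv.swap a c * Equiv.swap a e) := by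
                  group
              _ = Equiv.swap a c * Equiv.swap a e := by
                  rw [Equiv.swap_mul_self, one_mul]
          refine ⟨a, c, e, Ne.symm hca, Ne.symm hea, fun h => hec h.symm, ?_⟩
          rw [← hprod]
          exact hmul _ _ hνP hν'P
    obtain ⟨u, v, w, huv, huw, hvw, hP3⟩ := key3
    intro σ hσ
    let K : Subgroup (Equiv.Perm (Fin n)) :=
      { carrier := setOf P
        mul_mem' := fun ha hb => hmul _ _ ha hb
        one_mem' := h1
        inv_mem' := fun ha => hinv _ ha }
    have hK3 : ∀ g : Equiv.Perm (Fin n), g.IsThreeCycle → g ∈ K := by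
      intro g hg
      obtain ⟨x, y, z, hxy, hxz, hyz, rfl⟩ := threeCycle_decomp hg
      obtain ⟨π, hπ1, hπ2, hπ3⟩ := exists_map_triple huv huw hvw hxz hxy (Ne.symm hyz)
      have hconjeq : π * (Equiv.swap u v * Equiv.swap u w) * π⁻¹ =
          Equiv.swap x z * Equiv.swap x y := by
        have h2 : π * (Equiv.swap u v * Equiv.swap u w) * π⁻¹ =
            (π * Equiv.swap u v * π⁻¹) * (π * Equiv.swap u w * π⁻¹) := by group
        rw [h2, ← Equiv.swap_apply_apply, ← Equiv.swap_apply_apply, hπ1, hπ2, hπ3]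
      rw [← hconjeq]
      exact hconj π _ hP3
    have halt : alternatingGroup (Fin n) ≤ K := by
      rw [← Equiv.Perm.closure_three_cycles_eq_alternating]
      exact (Subgroup.closure_le K).mpr fun g hg => hK3 g hg
    exact halt (Equiv.Perm.mem_alternatingGroup.mpr hσ)


/-! ### Case B : φ injective on permutations -/

lemma caseB {n : ℕ} (hn : 1 ≤ n) (φ : (Fin n → Fin n) → (Fin n → Fin n)) (hφ : IsEndo φ)
    (hinj : ∀ σ τ : Equiv.Perm (Fin n), φ ⇑σ = φ ⇑τ → σ = τ) :
    ∃ g : Equiv.Perm (Fin n), φ = fun s => ⇑g ∘ s ∘ ⇑g⁻¹ := by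
  have hidl : ∀ s, φ id ∘ φ s = φ s := fun s => by rw [← hφ, Function.id_comp]
  have hidr : ∀ s, φ s ∘ φ id = φ s := fun s => by rw [← hφ, Function.comp_id]
  have hff : φ id ∘ φ id = φ id := hidl id
  have hfid : φ id = id := by
    by_contra hfne
    have hnsurj : ¬ Function.Surjective (φ id) := by
      intro hs
      have hinj' : Function.Injective (φ id) := Finite.injective_iff_surjective.mpr hs
      exact hfne (funext fun x => hinj' (congrFun hff x))
    rw [Function.Surjective] at hnsurj
    push_neg at hnsurj
    obtain ⟨u, hu⟩ := hnsurj
    set B : Finset (Fin n) := Finset.image (φ id) Finset.univ with hB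
    have huB : u ∉ B := by
      rw [hB]
      simp only [Finset.mem_image, Finset.mem_univ, true_and, not_exists]
      exact fun x => hu x
    have hmemB : ∀ (s : Fin n → Fin n) (x : Fin n), φ s x ∈ B := by
      intro s x
      have h1 : φ s x = φ id (φ s x) := (congrFun (hidl s) x).symm
      rw [hB]
      exact Finset.mem_image.mpr ⟨φ s x, Finset.mem_univ _, h1.symm⟩
    have hBlt : B.card < n := by
      have hle := Finset.card_le_univ B
      rw [Fintype.card_fin] at hle
      rcases lt_or_eq_of_le hle with h | h
      · exact h
      · exact absurd (Finset.eq_univ_of_card B (by rw [h, Fintype.card_fin]) ▸ Finset.mem_univ u)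
          huB
    have hfix : ∀ x : Fin n, x ∈ B → φ id x = x := by
      intro x hx
      obtain ⟨z, _, rfl⟩ := Finset.mem_image.mp hx
      exact congrFun hff z
    have hcompinv : ∀ σ : Equiv.Perm (Fin n), φ ⇑σ⁻¹ ∘ φ ⇑σ = φ id := by
      intro σ
      have h1 : ⇑σ⁻¹ ∘ ⇑σ = id := funext fun y => σ.symm_apply_apply y
      rw [← hφ, h1]
    have hcompinv' : ∀ σ : Equiv.Perm (Fin n), φ ⇑σ ∘ φ ⇑σ⁻¹ = φ id := by
      intro σ
      have h1 : ⇑σ ∘ ⇑σ⁻¹ = id := funext fun y => σ.apply_symm_apply y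
      rw [← hφ, h1]
    let E : Equiv.Perm (Fin n) → ({y // y ∈ B} ≃ {y // y ∈ B}) := fun σ =>
      { toFun := fun x => ⟨φ ⇑σ x, hmemB _ _⟩
        invFun := fun x => ⟨φ ⇑σ⁻¹ x, hmemB _ _⟩
        left_inv := by
          intro x
          apply Subtype.ext
          show φ ⇑σ⁻¹ (φ ⇑σ ↑x) = ↑x
          calc φ ⇑σ⁻¹ (φ ⇑σ ↑x) = φ id ↑x := congrFun (hcompinv σ) ↑x
            _ = ↑x := hfix _ x.2
        right_inv := by
          intro x
          apply Subtype.ext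
          show φ ⇑σ (φ ⇑σ⁻¹ ↑x) = ↑x
          calc φ ⇑σ (φ ⇑σ⁻¹ ↑x) = φ id ↑x := congrFun (hcompinv' σ) ↑x
            _ = ↑x := hfix _ x.2 }
    have hEinj : Function.Injective E := by
      intro σ τ h
      apply hinj
      funext x
      have h1 : φ ⇑σ x = φ ⇑σ (φ id x) := (congrFun (hidr ⇑σ) x).symm
      have h2 : φ ⇑τ x = φ ⇑τ (φ id x) := (congrFun (hidr ⇑τ) x).symm
      have h3 : φ id x ∈ B := hmemB id x
      have h4 := congrArg (fun e : {y // y ∈ B} ≃ {y // y ∈ B} => (e ⟨φ id x, h3⟩ : Fin n)) h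
      simp only [E] at h4
      rw [h1, h2]
      exact h4
    have hcard := Fintype.card_le_of_injective E hEinj
    rw [Fintype.card_perm, Fintype.card_fin] at hcard
    rw [Fintype.card_equiv (Equiv.refl _), Fintype.card_coe] at hcard
    have hBpos : 0 < B.card := Finset.card_pos.mpr ⟨φ id ⟨0, hn⟩, hmemB id ⟨0, hn⟩⟩
    have := (Nat.factorial_lt hBpos).mpr hBlt
    omega
  have hmulinv : ∀ σ : Equiv.Perm (Fin n), φ ⇑σ⁻¹ ∘ φ ⇑σ = id := by
    intro σ
    rw [← hφ]
    have h1 : ⇑σ⁻¹ ∘ ⇑σ = id := funext fun y => σ.symm_apply_apply y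
    rw [h1, hfid]
  have hmulinv' : ∀ σ : Equiv.Perm (Fin n), φ ⇑σ ∘ φ ⇑σ⁻¹ = id := by
    intro σ
    rw [← hφ]
    have h1 : ⇑σ ∘ ⇑σ⁻¹ = id := funext fun y => σ.apply_symm_apply y
    rw [h1, hfid]
  let Φ : Equiv.Perm (Fin n) → Equiv.Perm (Fin n) := fun σ =>
    { toFun := φ ⇑σ
      invFun := φ ⇑σ⁻¹
      left_inv := fun x => congrFun (hmulinv σ) x
      right_inv := fun x => congrFun (hmulinv' σ) x }
  have hΦinj : Function.Injective Φ := by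
    intro σ τ h
    apply hinj
    exact congrArg (fun e : Equiv.Perm (Fin n) => (e : Fin n → Fin n)) h
  have hΦsurj : Function.Surjective Φ := Finite.injective_iff_surjective.mp hΦinj
  have hsurj : ∀ π : Equiv.Perm (Fin n), ∃ σ : Equiv.Perm (Fin n), φ ⇑σ = ⇑π := by
    intro π
    obtain ⟨σ, hσ⟩ := hΦsurj π
    exact ⟨σ, by rw [← hσ]; rfl⟩
  have hdabs : ∀ (j : Fin n) (s : Fin n → Fin n),
      φ (Function.const (Fin n) j) ∘ φ s = φ (Function.const (Fin n) j) := by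
    intro j s
    rw [← hφ]
    rfl
  have hdconst : ∀ (j x y : Fin n),
      φ (Function.const (Fin n) j) x = φ (Function.const (Fin n) j) y := by
    intro j x y
    obtain ⟨σ, hσ⟩ := hsurj (Equiv.swap x y)
    have h1 := congrFun (hdabs j ⇑σ) y
    rw [hσ] at h1
    simp only [Function.comp_apply, Equiv.swap_apply_right] at h1
    exact h1
  set z₀ : Fin n := ⟨0, hn⟩ with hz₀
  set g : Fin n → Fin n := fun j => φ (Function.const (Fin n) j) z₀ with hg
  have hrel : ∀ (s : Fin n → Fin n) (j : Fin n), φ s (g j) = g (s j) := by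
    intro s j
    have h1 : s ∘ Function.const (Fin n) j = Function.const (Fin n) (s j) := rfl
    have h2 : φ s ∘ φ (Function.const (Fin n) j) = φ (Function.const (Fin n) (s j)) :=
      (hφ s (Function.const (Fin n) j)).symm.trans (congrArg φ h1)
    exact congrFun h2 z₀
  have hginj : Function.Injective g := by
    intro i j hij
    by_contra hne
    have hgc : ∀ k, g k = g i := by
      intro k
      rcases eq_or_ne k i with rfl | hki
      · rfl
      rcases eq_or_ne k j with rfl | hkj
      · exact hij.symm
      have h1 := hrel ⇑(Equiv.swap j k) j
      have h2 := hrel ⇑(Equiv.swap j k) i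
      rw [Equiv.swap_apply_left] at h1
      rw [Equiv.swap_apply_of_ne_of_ne (fun h => hne h) (Ne.symm hki)] at h2
      rw [← hij] at h1
      exact (h1.symm.trans h2 : g k = g i)
    haveI : Nontrivial (Fin n) := ⟨⟨i, j, fun h => hne h⟩⟩
    obtain ⟨x, hx⟩ := exists_ne (g z₀)
    obtain ⟨σ, hσ⟩ := hsurj (Equiv.swap (g z₀) x)
    have h1 := hrel ⇑σ z₀
    rw [hσ, Equiv.swap_apply_left] at h1
    exact hx (h1.trans ((hgc (σ z₀)).trans (hgc z₀).symm))
  have hgbij : Function.Bijective g := hginj.bijective_of_finite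
  refine ⟨Equiv.ofBijective g hgbij, ?_⟩
  funext s
  funext x
  show φ s x = (Equiv.ofBijective g hgbij) (s ((Equiv.ofBijective g hgbij)⁻¹ x))
  rw [Equiv.Perm.inv_def]
  have hx : x = g ((Equiv.ofBijective g hgbij).symm x) :=
    ((Equiv.ofBijective g hgbij).apply_symm_apply x).symm
  calc φ s x = φ s (g ((Equiv.ofBijective g hgbij).symm x)) := by rw [← hx]
    _ = g (s ((Equiv.ofBijective g hgbij).symm x)) := hrel s _
    _ = (Equiv.ofBijective g hgbij) (s ((Equiv.ofBijective g hgbij).symm x)) := rfl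


/-! ### all eta maps have the same image under φ -/

lemma hp_eq_lemma {n : ℕ} (hn : 2 ≤ n) (hn4 : n ≠ 4)
    (φ : (Fin n → Fin n) → (Fin n → Fin n)) (hφ : IsEndo φ)
    (heven : ∀ σ : Equiv.Perm (Fin n), Equiv.Perm.sign σ = 1 → φ ⇑σ = φ id)
    (ρ : Equiv.Perm (Fin n)) (hρ1 : ρ ≠ 1) (hρf : φ ⇑ρ = φ id) :
    ∀ a b c d : Fin n, a ≠ b → c ≠ d → φ (eta a b) = φ (eta c d) := by
  have hidl : ∀ s, φ id ∘ φ s = φ s := fun s => by rw [← hφ, Function.id_comp]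
  have hidr : ∀ s, φ s ∘ φ id = φ s := fun s => by rw [← hφ, Function.comp_id]
  have hconjgen : ∀ (σ : Equiv.Perm (Fin n)) (s : Fin n → Fin n),
      φ ⇑σ = φ id → φ ⇑σ⁻¹ = φ id → φ (⇑σ ∘ s ∘ ⇑σ⁻¹) = φ s := by
    intro σ s h1 h2
    rw [hφ, hφ, h1, h2, hidr, hidl]
  have hstep0 : ∀ (σ : Equiv.Perm (Fin n)) (a b : Fin n), φ ⇑σ = φ id → φ ⇑σ⁻¹ = φ id →
      φ (eta (σ a) (σ b)) = φ (eta a b) := by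
    intro σ a b h1 h2
    rw [← conj_eta]
    exact hconjgen σ _ h1 h2
  have hstep : ∀ (σ : Equiv.Perm (Fin n)) (a b : Fin n), Equiv.Perm.sign σ = 1 →
      φ (eta (σ a) (σ b)) = φ (eta a b) := by
    intro σ a b h1
    refine hstep0 σ a b (heven σ h1) (heven σ⁻¹ ?_)
    rw [map_inv, h1, inv_one]
  rcases Nat.lt_or_ge n 5 with h5 | h5
  · interval_cases n
    · -- n = 2
      have hcl : ∀ τ : Equiv.Perm (Fin 2), τ = 1 ∨ τ = Equiv.swap 0 1 := by decide
      have hallσ : ∀ σ : Equiv.Perm (Fin 2), φ ⇑σ = φ id := by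
        intro σ
        rcases hcl σ with rfl | rfl
        · exact heven 1 (by simp)
        · rcases hcl ρ with h | h
          · exact absurd h hρ1
          · rw [← h]; exact hρf
      have hstep2 : ∀ (σ : Equiv.Perm (Fin 2)) (a b : Fin 2),
          φ (eta (σ a) (σ b)) = φ (eta a b) := fun σ a b =>
        hstep0 σ a b (hallσ σ) (hallσ σ⁻¹)
      intro a b c d hab hcd
      obtain ⟨σ₁, h11, h12⟩ := exists_map_pair (show (0:Fin 2) ≠ 1 by decide) hab
      obtain ⟨σ₂, h21, h22⟩ := exists_map_pair (show (0:Fin 2) ≠ 1 by decide) hcd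
      rw [← h11, ← h12, ← h21, ← h22, hstep2 σ₁ 0 1, hstep2 σ₂ 0 1]
    · -- n = 3
      intro a b c d hab hcd
      set A : Equiv.Perm (Fin 3) := Equiv.swap 0 1 * Equiv.swap 0 2 with hA_def
      have hAsign : Equiv.Perm.sign A = 1 := by
        rw [hA_def, map_mul, Equiv.Perm.sign_swap (by decide), Equiv.Perm.sign_swap (by decide)]
        decide
      have hstepA : ∀ a b : Fin 3, φ (eta (A a) (A b)) = φ (eta a b) := fun a b =>
        hstep A a b hAsign
      have hA0 : A 0 = 2 := by decide
      have hA1 : A 1 = 0 := by decide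
      have hA2 : A 2 = 1 := by decide
      have e1 : φ (eta (2:Fin 3) 0) = φ (eta 0 1) := by
        have := hstepA 0 1; rwa [hA0, hA1] at this
      have e2 : φ (eta (1:Fin 3) 2) = φ (eta 2 0) := by
        have := hstepA 2 0; rwa [hA2, hA0] at this
      have e3 : φ (eta (0:Fin 3) 2) = φ (eta 1 0) := by
        have := hstepA 1 0; rwa [hA1, hA0] at this
      have e4 : φ (eta (2:Fin 3) 1) = φ (eta 0 2) := by
        have := hstepA 0 2; rwa [hA0, hA2] at this
      have r1 : eta (0:Fin 3) 1 ∘ eta 1 0 = eta 0 1 := by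
        funext x; fin_cases x <;> rfl
      have r2 : eta (0:Fin 3) 1 ∘ eta 2 1 = Function.const (Fin 3) 1 := by
        funext x; fin_cases x <;> rfl
      have r3 : eta (1:Fin 3) 0 ∘ eta 0 1 = eta 1 0 := by
        funext x; fin_cases x <;> rfl
      have r4 : eta (1:Fin 3) 0 ∘ eta 2 0 = Function.const (Fin 3) 0 := by
        funext x; fin_cases x <;> rfl
      have hP1021 : φ (eta (1:Fin 3) 0) = φ (eta 2 1) := (e4.trans e3).symm
      have hP2const1 : φ (eta (0:Fin 3) 1) = φ (Function.const (Fin 3) 1) := by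
        have h1 : φ (eta (0:Fin 3) 1) = φ (eta 0 1) ∘ φ (eta 1 0) := by rw [← hφ, r1]
        rw [h1, hP1021, ← hφ, r2]
      have hP10const0 : φ (eta (1:Fin 3) 0) = φ (Function.const (Fin 3) 0) := by
        have h1 : φ (eta (1:Fin 3) 0) = φ (eta 1 0) ∘ φ (eta 0 1) := by rw [← hφ, r3]
        have h2 : φ (eta (0:Fin 3) 1) = φ (eta 2 0) := e1.symm
        rw [h1, h2, ← hφ, r4]
      have hconst01 : φ (Function.const (Fin 3) 0) = φ (Function.const (Fin 3) 1) := by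
        have h1 := hconjgen A (Function.const (Fin 3) 1) (heven A hAsign)
          (heven A⁻¹ (by rw [map_inv, hAsign, inv_one]))
        rw [conj_const, hA1] at h1
        exact h1
      have hkey : φ (eta (0:Fin 3) 1) = φ (eta 1 0) :=
        hP2const1.trans (hconst01.symm.trans hP10const0.symm)
      have hall : ∀ a b : Fin 3, a ≠ b → φ (eta a b) = φ (eta 0 1) := by
        intro a b hab
        fin_cases a <;> fin_cases b
        · exact absurd rfl hab
        · rfl
        · exact e3.trans hkey.symm
        · exact hkey.symm
        · exact absurd rfl hab
        · exact e2.trans e1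
        · exact e1
        · exact e4.trans (e3.trans hkey.symm)
        · exact absurd rfl hab
      rw [hall a b hab, hall c d hcd]
    · exact absurd rfl hn4
  · -- n ≥ 5
    intro a b c d hab hcd
    obtain ⟨τ, hτc, hτd⟩ := exists_map_pair hcd hab
    obtain ⟨u, hu⟩ : ∃ u, u ∉ ({c, d} : Finset (Fin n)) := by
      apply exists_not_mem
      rw [Fintype.card_fin]
      refine lt_of_le_of_lt (Finset.card_insert_le _ _) ?_
      simp only [Finset.card_singleton]
      omega
    obtain ⟨v, hv⟩ : ∃ v, v ∉ ({c, d, u} : Finset (Fin n)) := by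
      apply exists_not_mem
      rw [Fintype.card_fin]
      refine lt_of_le_of_lt (Finset.card_insert_le _ _) ?_
      refine lt_of_le_of_lt (Nat.succ_le_succ (Finset.card_insert_le _ _)) ?_
      simp only [Finset.card_singleton]
      omega
    simp only [Finset.mem_insert, Finset.mem_singleton, not_or] at hu hv
    obtain ⟨huc, hud⟩ := hu
    obtain ⟨hvc, hvd, hvu⟩ := hv
    rcases Int.units_eq_one_or (Equiv.Perm.sign τ) with hsτ | hsτ
    · have h1 := hstep τ c d hsτ
      rw [hτc, hτd] at h1
      exact h1
    · set σ := τ * Equiv.swap u v with hσ_def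
      have hσsign : Equiv.Perm.sign σ = 1 := by
        rw [hσ_def, map_mul, hsτ, Equiv.Perm.sign_swap (fun h => hvu h.symm)]
        decide
      have hσc : σ c = a := by
        rw [hσ_def, Equiv.Perm.mul_apply,
          Equiv.swap_apply_of_ne_of_ne (Ne.symm huc) (Ne.symm hvc), hτc]
      have hσd : σ d = b := by
        rw [hσ_def, Equiv.Perm.mul_apply,
          Equiv.swap_apply_of_ne_of_ne (Ne.symm hud) (Ne.symm hvd), hτd]
      have h1 := hstep σ c d hσsign
      rw [hσc, hσd] at h1
      exact h1

/-! ### Case A : φ not injective on permutations -/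

lemma caseA {n : ℕ} (hn : 2 ≤ n) (hn4 : n ≠ 4)
    (φ : (Fin n → Fin n) → (Fin n → Fin n)) (hφ : IsEndo φ)
    (ρ : Equiv.Perm (Fin n)) (hρ1 : ρ ≠ 1) (hρf : φ ⇑ρ = φ id) :
    ∃ t e : Fin n → Fin n, Permissible t e ∧ φ = phi t e := by
  have hidl : ∀ s, φ id ∘ φ s = φ s := fun s => by rw [← hφ, Function.id_comp]
  have hidr : ∀ s, φ s ∘ φ id = φ s := fun s => by rw [← hφ, Function.comp_id]
  have hff : φ id ∘ φ id = φ id := hidl id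
  have heven : ∀ σ : Equiv.Perm (Fin n), Equiv.Perm.sign σ = 1 → φ ⇑σ = φ id := by
    apply evenP n hn hn4 (fun σ => φ ⇑σ = φ id) (by rw [Equiv.Perm.coe_one])
      ?_ ?_ ρ hρ1 hρf
    · intro σ τ hσ hτ
      rw [Equiv.Perm.coe_mul, hφ, hσ, hτ]
      exact hff
    · intro σ τ hτ
      have hcoe : ⇑(σ * τ * σ⁻¹) = ⇑σ ∘ (⇑τ ∘ ⇑σ⁻¹) := by
        rw [Equiv.Perm.coe_mul, Equiv.Perm.coe_mul]
        rfl
      rw [hcoe, hφ, hφ, hτ, hidl]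
      rw [← hφ]
      have h1 : ⇑σ ∘ ⇑σ⁻¹ = id := funext fun y => σ.apply_symm_apply y
      rw [h1]
  set a0 : Fin n := ⟨0, by omega⟩ with ha0
  set a1 : Fin n := ⟨1, by omega⟩ with ha1
  have h01 : a0 ≠ a1 := by simp [ha0, ha1, Fin.ext_iff]
  set τ₀ := Equiv.swap a0 a1 with hτ₀
  set t := φ ⇑τ₀ with ht
  have hsτ₀ : Equiv.Perm.sign τ₀ = -1 := Equiv.Perm.sign_swap h01
  have hodd : ∀ σ : Equiv.Perm (Fin n), Equiv.Perm.sign σ = -1 → φ ⇑σ = t := by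
    intro σ hσ
    have hdecomp : ⇑σ = ⇑τ₀ ∘ ⇑(τ₀⁻¹ * σ) := by
      rw [← Equiv.Perm.coe_mul, mul_inv_cancel_left]
    have hsgn : Equiv.Perm.sign (τ₀⁻¹ * σ) = 1 := by
      rw [map_mul, map_inv, hsτ₀, hσ]
      decide
    rw [hdecomp, hφ, heven _ hsgn, hidr]
  have htt : t ∘ t = φ id := by
    have h1 : t ∘ t = φ (⇑τ₀ ∘ ⇑τ₀) := (hφ _ _).symm
    rw [h1, ← Equiv.Perm.coe_mul]
    refine heven _ ?_
    rw [map_mul, hsτ₀]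
    decide
  set p := φ (eta a0 a1) with hp
  have hp_eq : ∀ a b : Fin n, a ≠ b → φ (eta a b) = p :=
    fun a b hab => hp_eq_lemma hn hn4 φ hφ heven ρ hρ1 hρf a b a0 a1 hab h01
  have hpp : p ∘ p = p := by
    have h1 : p ∘ p = φ (eta a0 a1 ∘ eta a0 a1) := (hφ _ _).symm
    rw [h1, eta_comp_eta h01]
  have htp : t ∘ p = p := by
    have h1 : φ (eta a1 a0) = p := hp_eq a1 a0 h01.symm
    have h2 : eta a1 a0 = ⇑τ₀ ∘ eta a0 a1 := (swap_comp_eta h01).symm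
    rw [h2, hφ] at h1
    exact h1
  have hfp : φ id ∘ p = p := hidl _
  have hpf : p ∘ φ id = p := hidr _
  -- the master induction on the defect
  have hQ : ∀ d : ℕ, ∀ s : Fin n → Fin n, ¬ Function.Bijective s →
      n - (Finset.image s Finset.univ).card ≤ d + 1 → φ s = p := by
    intro d
    induction d with
    | zero =>
      intro s hs hd
      have hni : ¬ Function.Injective s := fun hi => hs hi.bijective_of_finite
      rw [Function.Injective] at hni
      push_neg at hni
      obtain ⟨a, b, hsab, hab⟩ := hni
      have hRlt : (Finset.image s Finset.univ).card < n := by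
        have hle := Finset.card_le_univ (Finset.image s Finset.univ)
        rw [Fintype.card_fin] at hle
        rcases lt_or_eq_of_le hle with h | h
        · exact h
        · exfalso
          have huniv : Finset.image s Finset.univ = Finset.univ :=
            Finset.eq_univ_of_card _ (by rw [Fintype.card_fin]; exact h)
          have hsurj : Function.Surjective s := by
            intro y
            have : y ∈ Finset.image s Finset.univ := by
              rw [huniv]; exact Finset.mem_univ y
            obtain ⟨x, _, hx⟩ := Finset.mem_image.mp this
            exact ⟨x, hx⟩
          exact hs ⟨Finite.injective_iff_surjective.mpr hsurj, hsurj⟩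
      have hRcard : (Finset.image s Finset.univ).card = n - 1 := by omega
      obtain ⟨u, hu⟩ : ∃ u, u ∉ Finset.image s Finset.univ :=
        exists_not_mem _ (by rw [Fintype.card_fin]; omega)
      have himg : Finset.image s (Finset.univ.erase a) = Finset.image s Finset.univ := by
        apply Finset.Subset.antisymm
        · exact Finset.image_subset_image (Finset.erase_subset _ _)
        · intro y hy
          obtain ⟨x, _, rfl⟩ := Finset.mem_image.mp hy
          by_cases hxa : x = a
          · subst hxa
            exact Finset.mem_image.mpr
              ⟨b, Finset.mem_erase.mpr ⟨hab.symm, Finset.mem_univ _⟩, hsab.symm⟩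
          · exact Finset.mem_image.mpr ⟨x, Finset.mem_erase.mpr ⟨hxa, Finset.mem_univ _⟩, rfl⟩
      have hinjOn : Set.InjOn s (Finset.univ.erase a) :=
        Finset.injOn_of_card_image_eq (by
          rw [himg, hRcard, Finset.card_erase_of_mem (Finset.mem_univ a), Finset.card_univ,
            Fintype.card_fin])
      set π : Fin n → Fin n := fun x => if x = a then u else s x with hπ
      have hπinj : Function.Injective π := by
        intro x y hxy
        by_cases hx : x = a <;> by_cases hy : y = a
        · rw [hx, hy]
        · exfalso
          rw [hπ] at hxy
          simp only [hx, hy, if_pos, if_neg, if_true, if_false] at hxy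
          exact hu (Finset.mem_image.mpr ⟨y, Finset.mem_univ _, hxy.symm⟩)
        · exfalso
          rw [hπ] at hxy
          simp only [hx, hy, if_pos, if_neg, if_true, if_false] at hxy
          exact hu (Finset.mem_image.mpr ⟨x, Finset.mem_univ _, hxy⟩)
        · rw [hπ] at hxy
          simp only [hx, hy, if_neg, if_false] at hxy
          exact hinjOn (by simp [hx]) (by simp [hy]) hxy
      have hπbij : Function.Bijective π := hπinj.bijective_of_finite
      have hseq : s = ⇑(Equiv.ofBijective π hπbij) ∘ eta a b := by
        funext x
        show s x = π (eta a b x)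
        by_cases hxa : x = a
        · subst hxa
          have h1 : eta x b x = b := if_pos rfl
          rw [h1, hπ]
          simp only [if_neg hab.symm]
          exact hsab
        · have h1 : eta a b x = x := if_neg hxa
          rw [h1, hπ]
          simp only [if_neg hxa]
      rw [hseq, hφ]
      rcases Int.units_eq_one_or (Equiv.Perm.sign (Equiv.ofBijective π hπbij)) with h | h
      · rw [heven _ h, hp_eq a b hab]
        exact hfp
      · rw [hodd _ h, hp_eq a b hab]
        exact htp
    | succ d ih =>
      intro s hs hd
      rcases Nat.lt_or_ge (n - (Finset.image s Finset.univ).card) (d + 2) with h | h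
      · exact ih s hs (by omega)
      · have heqd : n - (Finset.image s Finset.univ).card = d + 2 := by omega
        have hni : ¬ Function.Injective s := fun hi => hs hi.bijective_of_finite
        rw [Function.Injective] at hni
        push_neg at hni
        obtain ⟨a, b, hsab, hab⟩ := hni
        have hRlt : (Finset.image s Finset.univ).card < n := by
          have h0 : (Finset.image s Finset.univ).Nonempty := ⟨s a0, Finset.mem_image.mpr ⟨a0, Finset.mem_univ _, rfl⟩⟩
          have h1 := Finset.card_pos.mpr h0
          omega
        obtain ⟨w, hw⟩ : ∃ w, w ∉ Finset.image s Finset.univ :=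
          exists_not_mem _ (by rw [Fintype.card_fin]; omega)
        set b' : Fin n → Fin n := fun x => if x = a then w else s x with hb'
        have hwsa : w ≠ s a := by
          intro h
          exact hw (by rw [h]; exact Finset.mem_image.mpr ⟨a, Finset.mem_univ _, rfl⟩)
        have hseq : s = eta w (s a) ∘ b' := by
          funext x
          show s x = eta w (s a) (b' x)
          by_cases hxa : x = a
          · subst hxa
            have h1 : b' x = w := if_pos rfl
            rw [h1]
            show s x = if w = w then s x else w
            rw [if_pos rfl]
          · have h1 : b' x = s x := if_neg hxa
            rw [h1]
            show s x = if s x = w then s a else s x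
            rw [if_neg (fun h => hw (Finset.mem_image.mpr ⟨x, Finset.mem_univ _, h⟩))]
        have himg' : Finset.image b' Finset.univ = insert w (Finset.image s Finset.univ) := by
          ext y
          simp only [Finset.mem_image, Finset.mem_univ, true_and, Finset.mem_insert]
          constructor
          · rintro ⟨x, rfl⟩
            by_cases hxa : x = a
            · left; rw [hb']; simp [hxa]
            · right; exact ⟨x, by rw [hb']; simp [hxa]⟩
          · rintro (rfl | ⟨x, rfl⟩)
            · exact ⟨a, if_pos rfl⟩
            · by_cases hxa : x = a
              · refine ⟨b, ?_⟩
                rw [hb']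
                simp only [if_neg hab.symm]
                rw [hxa, hsab]
              · exact ⟨x, if_neg hxa⟩
        have hb'card : (Finset.image b' Finset.univ).card =
            (Finset.image s Finset.univ).card + 1 := by
          rw [himg', Finset.card_insert_of_notMem hw]
        have hb'nb : ¬ Function.Bijective b' := by
          intro hbij
          have huniv : Finset.image b' Finset.univ = Finset.univ :=
            Finset.eq_univ_iff_forall.mpr fun y =>
              Finset.mem_image.mpr ⟨(hbij.2 y).choose, Finset.mem_univ _, (hbij.2 y).choose_spec⟩
          rw [huniv, Finset.card_univ, Fintype.card_fin] at hb'card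
          omega
        have hIH := ih b' hb'nb (by omega)
        rw [hseq, hφ, hIH, hp_eq w (s a) hwsa]
        exact hpp
  have hsing : ∀ s : Fin n → Fin n, ¬ Function.Bijective s → φ s = p := by
    intro s hs
    exact hQ n s hs (by omega)
  refine ⟨t, p, ⟨?_, htp, ?_, hpp⟩, ?_⟩
  · show t ∘ t ∘ t = t
    rw [htt]
    exact hidr _
  · -- p ∘ t = p
    have hnb : ¬ Function.Bijective (eta a0 a1 ∘ ⇑τ₀) := by
      intro hbij
      have hsurj2 : Function.Surjective (eta a0 a1) := hbij.2.of_comp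
      exact eta_not_bijective h01 ⟨Finite.injective_iff_surjective.mpr hsurj2, hsurj2⟩
    have h1 := hsing _ hnb
    rw [hφ] at h1
    exact h1
  · funext s
    by_cases hb : Function.Bijective s
    · have hcoe : ⇑(Equiv.ofBijective s hb) = s := rfl
      rcases Int.units_eq_one_or (Equiv.Perm.sign (Equiv.ofBijective s hb)) with hsgn | hsgn
      · have hno : ¬ IsOddPerm s := by
          rintro ⟨σ', hs', hc'⟩
          have hσ'eq : σ' = Equiv.ofBijective s hb := Equiv.coe_fn_injective (hc'.trans hcoe.symm)
          rw [hσ'eq, hsgn] at hs'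
          exact absurd hs' (by decide)
        have hyes : IsEvenPerm s := ⟨Equiv.ofBijective s hb, hsgn, hcoe⟩
        show φ s = phi t p s
        rw [phi, if_neg hno, if_pos hyes]
        calc φ s = φ id := heven _ hsgn
          _ = t ∘ t := htt.symm
      · have hyes : IsOddPerm s := ⟨Equiv.ofBijective s hb, hsgn, hcoe⟩
        show φ s = phi t p s
        rw [phi, if_pos hyes]
        exact hodd _ hsgn
    · have hno : ¬ IsOddPerm s := by
        rintro ⟨σ', _, rfl⟩
        exact hb σ'.bijective
      have hno' : ¬ IsEvenPerm s := by
        rintro ⟨σ', _, rfl⟩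
        exact hb σ'.bijective
      show φ s = phi t p s
      rw [phi, if_neg hno, if_neg hno']
      exact hsing s hb

end EndoClassAux

theorem endo_classification (n : ℕ) (hn : 1 ≤ n) (hn4 : n ≠ 4)
    (φ : (Fin n → Fin n) → (Fin n → Fin n)) (hφ : IsEndo φ) :
    (∃ g : Equiv.Perm (Fin n), φ = fun s => ⇑g ∘ s ∘ ⇑g⁻¹) ∨
      (∃ t e : Fin n → Fin n, Permissible t e ∧ φ = phi t e) := by
  by_cases hinj : ∀ σ τ : Equiv.Perm (Fin n), φ ⇑σ = φ ⇑τ → σ = τ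
  · exact Or.inl (EndoClassAux.caseB hn φ hφ hinj)
  · push_neg at hinj
    obtain ⟨σ, τ, hfeq, hne⟩ := hinj
    have hρ1 : σ * τ⁻¹ ≠ 1 := fun h => hne (mul_inv_eq_one.mp h)
    have hρf : φ ⇑(σ * τ⁻¹) = φ id := by
      rw [Equiv.Perm.coe_mul, hφ, hfeq, ← hφ, ← Equiv.Perm.coe_mul, mul_inv_cancel,
        Equiv.Perm.coe_one]
    have hn2 : 2 ≤ n := by
      by_contra h
      push_neg at h
      interval_cases n
      haveI : Subsingleton (Fin 1) := inferInstance
      exact hne (Equiv.ext fun x => Subsingleton.elim _ _)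
    exact Or.inr (EndoClassAux.caseA hn2 hn4 φ hφ (σ * τ⁻¹) hρ1 hρf)
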